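/- The geometric-series function f(x) = ∑_{α ∈ ℕ^(ℕ)} x^α is well defined (the family is absolutely summable) on the domain D = {x = (x_i) ∈ ℝ^ℕ : ∑_i |x_i| < 1}, and for x ∈ D one has f(x) = ∏_{i=1}^∞ 1/(1 - x_i). -/
import Mathlib


open Finset

private lemma prod_pow_erase_aux (y : ℕ → ℝ) (a : ℕ) (α : ℕ →₀ ℕ) :
    (α.prod fun i e => y i ^ e) = y a ^ α a * ((α.erase a).prod fun i e => y i ^ e) := by
  conv_lhs => rw [← Finsupp.single_add_erase a α]
  rw [Finsupp.prod_add_index' (fun i => pow_zero (y i)) (fun i b c => pow_add (y i) b c)]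
  congr 1
  exact Finsupp.prod_single_index (pow_zero (y a))

private lemma geom_bound_aux (r : ℕ → ℝ) (hr0 : ∀ i, 0 ≤ r i) (hr1 : ∀ i, r i < 1) :
    ∀ T : Finset ℕ, ∀ S : Finset (ℕ →₀ ℕ), (∀ α ∈ S, α.support ⊆ T) →
      ∑ α ∈ S, (α.prod fun i e => r i ^ e) ≤ ∏ i ∈ T, (1 - r i)⁻¹ := by
  classical
  intro T
  induction T using Finset.induction with
  | empty =>
      intro S hS
      have hS' : S ⊆ {0} := by
        intro α hα
        rw [Finset.mem_singleton]
        exact Finsupp.support_eq_empty.mp (Finset.subset_empty.mp (hS α hα))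
      calc ∑ α ∈ S, (α.prod fun i e => r i ^ e)
          ≤ ∑ α ∈ ({0} : Finset (ℕ →₀ ℕ)), (α.prod fun i e => r i ^ e) := by
            refine Finset.sum_le_sum_of_subset_of_nonneg hS' ?_
            intro α _ _
            exact Finset.prod_nonneg fun i _ => pow_nonneg (hr0 i) _
        _ = 1 := by simp [Finsupp.prod_zero_index]
        _ = ∏ i ∈ (∅ : Finset ℕ), (1 - r i)⁻¹ := by simp
  | @insert a T' ha ih =>
      intro S hS
      have hP' : (0:ℝ) ≤ ∏ i ∈ T', (1 - r i)⁻¹ :=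
        Finset.prod_nonneg fun i _ => inv_nonneg.mpr (by linarith [hr1 i])
      rw [← Finset.sum_fiberwise_of_maps_to
        (fun α hα => Finset.mem_image_of_mem (fun α : ℕ →₀ ℕ => α a) hα)
        (fun α : ℕ →₀ ℕ => α.prod fun i e => r i ^ e)]
      have step1 : ∀ k ∈ S.image (fun α : ℕ →₀ ℕ => α a),
          ∑ α ∈ S.filter (fun α => α a = k), (α.prod fun i e => r i ^ e)
            ≤ r a ^ k * ∏ i ∈ T', (1 - r i)⁻¹ := by
        intro k hk
        have hrw : ∑ α ∈ S.filter (fun α => α a = k), (α.prod fun i e => r i ^ e)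
            = r a ^ k * ∑ α ∈ S.filter (fun α => α a = k),
                ((α.erase a).prod fun i e => r i ^ e) := by
          rw [Finset.mul_sum]
          refine Finset.sum_congr rfl fun α hα => ?_
          rw [prod_pow_erase_aux r a α, (Finset.mem_filter.mp hα).2]
        rw [hrw]
        refine mul_le_mul_of_nonneg_left ?_ (pow_nonneg (hr0 a) k)
        have hinj : ∀ α ∈ S.filter (fun α : ℕ →₀ ℕ => α a = k),
            ∀ β ∈ S.filter (fun α : ℕ →₀ ℕ => α a = k),
              α.erase a = β.erase a → α = β := by
          intro α hα β hβ h
          have hαk := (Finset.mem_filter.mp hα).2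
          have hβk := (Finset.mem_filter.mp hβ).2
          calc α = Finsupp.single a (α a) + α.erase a := (Finsupp.single_add_erase a α).symm
            _ = Finsupp.single a (β a) + β.erase a := by rw [hαk, hβk, h]
            _ = β := Finsupp.single_add_erase a β
        have himg := Finset.sum_image (s := S.filter (fun α : ℕ →₀ ℕ => α a = k))
          (g := fun α : ℕ →₀ ℕ => α.erase a)
          (f := fun β : ℕ →₀ ℕ => β.prod fun i e => r i ^ e) hinj
        refine le_trans (le_of_eq himg.symm) (ih _ fun β hβ => ?_)
        obtain ⟨α, hα, rfl⟩ := Finset.mem_image.mp hβ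
        intro i hi
        rw [Finsupp.support_erase, Finset.mem_erase] at hi
        have := hS α (Finset.mem_of_mem_filter α hα) hi.2
        rw [Finset.mem_insert] at this
        exact this.resolve_left hi.1
      calc ∑ k ∈ S.image (fun α : ℕ →₀ ℕ => α a),
            ∑ α ∈ S.filter (fun α => α a = k), (α.prod fun i e => r i ^ e)
          ≤ ∑ k ∈ S.image (fun α : ℕ →₀ ℕ => α a), r a ^ k * ∏ i ∈ T', (1 - r i)⁻¹ :=
            Finset.sum_le_sum step1
        _ = (∑ k ∈ S.image (fun α : ℕ →₀ ℕ => α a), r a ^ k) * ∏ i ∈ T', (1 - r i)⁻¹ := by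
            rw [Finset.sum_mul]
        _ ≤ (1 - r a)⁻¹ * ∏ i ∈ T', (1 - r i)⁻¹ := by
            refine mul_le_mul_of_nonneg_right ?_ hP'
            calc ∑ k ∈ S.image (fun α : ℕ →₀ ℕ => α a), r a ^ k
                ≤ ∑' k : ℕ, r a ^ k :=
                  Summable.sum_le_tsum _ (fun k _ => pow_nonneg (hr0 a) k)
                    (summable_geometric_of_lt_one (hr0 a) (hr1 a))
              _ = (1 - r a)⁻¹ := tsum_geometric_of_lt_one (hr0 a) (hr1 a)
        _ = ∏ i ∈ insert a T', (1 - r i)⁻¹ := (Finset.prod_insert (f := fun i => (1 - r i)⁻¹) ha).symm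

private lemma geom_summable_abs (x : ℕ → ℝ) (hx : Summable fun i => |x i|)
    (hx1 : (∑' i, |x i|) < 1) :
    Summable (fun α : ℕ →₀ ℕ => |α.prod fun i e => x i ^ e|) := by
  classical
  have hx' : ∀ i, |x i| < 1 := fun i =>
    lt_of_le_of_lt (Summable.le_tsum hx i fun j _ => abs_nonneg _) hx1
  have habs_eq : ∀ α : ℕ →₀ ℕ, |α.prod fun i e => x i ^ e|
      = α.prod fun i e => |x i| ^ e := by
    intro α
    simp [Finsupp.prod, Finset.abs_prod, abs_pow]
  have prod_lb : ∀ T : Finset ℕ, 1 - ∑ i ∈ T, |x i| ≤ ∏ i ∈ T, (1 - |x i|) := by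
    intro T
    induction T using Finset.induction with
    | empty => simp
    | @insert a T' ha ih =>
        rw [Finset.prod_insert ha, Finset.sum_insert ha]
        have h1 : (0:ℝ) ≤ ∑ i ∈ T', |x i| := Finset.sum_nonneg fun i _ => abs_nonneg _
        have h2 : (0:ℝ) ≤ 1 - |x a| := by linarith [hx' a]
        nlinarith [mul_le_mul_of_nonneg_left ih h2, abs_nonneg (x a)]
  have hpos : (0:ℝ) < 1 - ∑' i, |x i| := by linarith
  have bound : ∀ T : Finset ℕ, ∏ i ∈ T, (1 - |x i|)⁻¹ ≤ (1 - ∑' i, |x i|)⁻¹ := by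
    intro T
    rw [Finset.prod_inv_distrib]
    refine inv_anti₀ hpos ?_
    calc 1 - ∑' i, |x i| ≤ 1 - ∑ i ∈ T, |x i| := by
          have := Summable.sum_le_tsum T (fun i _ => abs_nonneg (x i)) hx
          linarith
      _ ≤ ∏ i ∈ T, (1 - |x i|) := prod_lb T
  refine summable_of_sum_le (c := (1 - ∑' i, |x i|)⁻¹) (fun α => abs_nonneg _) fun S => ?_
  calc ∑ α ∈ S, |α.prod fun i e => x i ^ e|
      = ∑ α ∈ S, (α.prod fun i e => |x i| ^ e) := Finset.sum_congr rfl fun α _ => habs_eq α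
    _ ≤ ∏ i ∈ S.sup Finsupp.support, (1 - |x i|)⁻¹ :=
        geom_bound_aux (fun i => |x i|) (fun i => abs_nonneg _) hx'
          (S.sup Finsupp.support) S (fun α hα => Finset.le_sup (f := Finsupp.support) hα)
    _ ≤ (1 - ∑' i, |x i|)⁻¹ := bound _

set_option maxHeartbeats 1000000 in
private lemma geom_hasSum_F (x : ℕ → ℝ) (hx' : ∀ i, |x i| < 1)
    (habs : Summable (fun α : ℕ →₀ ℕ => |α.prod fun i e => x i ^ e|)) :
    ∀ T : Finset ℕ, HasSum (fun α : ℕ →₀ ℕ =>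
      if α.support ⊆ T then α.prod (fun i e => x i ^ e) else 0) (∏ i ∈ T, (1 - x i)⁻¹) := by
  classical
  intro T
  induction T using Finset.induction with
  | empty =>
      have heq : (fun α : ℕ →₀ ℕ =>
          if α.support ⊆ (∅ : Finset ℕ) then α.prod (fun i e => x i ^ e) else 0)
          = fun α => if α = 0 then (1:ℝ) else 0 := by
        funext α
        by_cases h : α = 0
        · subst h; simp [Finsupp.prod_zero_index]
        · rw [if_neg h, if_neg]
          simpa [Finset.subset_empty, Finsupp.support_eq_empty] using h
      rw [heq]
      simpa using hasSum_ite_eq (0 : ℕ →₀ ℕ) (1:ℝ)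
  | @insert a T' ha ih =>
      have hFabs : Summable (fun α : ℕ →₀ ℕ =>
          ‖if α.support ⊆ T' then α.prod (fun i e => x i ^ e) else 0‖) := by
        refine Summable.of_nonneg_of_le (fun _ => norm_nonneg _) (fun α => ?_) habs
        rw [Real.norm_eq_abs]
        split_ifs
        · exact le_refl _
        · simp [abs_nonneg]
      have hgeo : Summable fun n : ℕ => ‖x a ^ n‖ := by
        simpa [Real.norm_eq_abs, abs_pow] using
          summable_geometric_of_lt_one (abs_nonneg (x a)) (hx' a)
      have hsummul : Summable (fun p : ℕ × (ℕ →₀ ℕ) => x a ^ p.1 *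
          (if p.2.support ⊆ T' then p.2.prod (fun i e => x i ^ e) else 0)) := by
        apply summable_mul_of_summable_norm hgeo hFabs
      have hmul := HasSum.mul (hasSum_geometric_of_abs_lt_one (hx' a)) ih hsummul
      rw [Finset.prod_insert ha]
      set g : ℕ × (ℕ →₀ ℕ) → ℝ := fun p =>
        x a ^ p.1 * (if p.2.support ⊆ T' then p.2.prod (fun i e => x i ^ e) else 0) with hg
      have hsupp_of_ne : ∀ p : ℕ × (ℕ →₀ ℕ), g p ≠ 0 → p.2.support ⊆ T' ∧ p.2 a = 0 := by
        intro p hp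
        have h1 : p.2.support ⊆ T' := by
          by_contra h
          simp [hg, h] at hp
        refine ⟨h1, ?_⟩
        by_contra h
        have : a ∈ p.2.support := Finsupp.mem_support_iff.mpr h
        exact ha (h1 this)
      refine (hasSum_iff_hasSum_of_ne_zero_bij
        (fun p : Function.support g => Finsupp.single a (p.1).1 + (p.1).2) ?_ ?_ ?_).mpr hmul
      · rintro ⟨⟨n, β⟩, hp⟩ ⟨⟨m, γ⟩, hq⟩ h
        simp only at h
        have hβ := (hsupp_of_ne _ hp).2
        have hγ := (hsupp_of_ne _ hq).2
        have hval := congrArg (fun f : ℕ →₀ ℕ => f a) h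
        simp only [Finsupp.add_apply, Finsupp.single_eq_same, hβ, hγ, add_zero] at hval
        subst hval
        have : β = γ := by
          have := congrArg (fun f : ℕ →₀ ℕ => f - Finsupp.single a n) h
          simpa [add_tsub_cancel_left] using this
        simp [this]
      · intro α hα
        have hne : (if α.support ⊆ insert a T' then α.prod (fun i e => x i ^ e) else 0) ≠ 0 := hα
        have hsub : α.support ⊆ insert a T' := by
          by_contra h
          simp [h] at hne
        rw [if_pos hsub] at hne
        have herase_sub : (α.erase a).support ⊆ T' := by
          rw [Finsupp.support_erase]
          intro i hi
          rw [Finset.mem_erase] at hi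
          exact (Finset.mem_insert.mp (hsub hi.2)).resolve_left hi.1
        have hkey := prod_pow_erase_aux x a α
        have hgne : g (α a, α.erase a) ≠ 0 := by
          simp only [hg, if_pos herase_sub]
          rw [← hkey]
          exact hne
        exact ⟨⟨(α a, α.erase a), hgne⟩, Finsupp.single_add_erase a α⟩
      · rintro ⟨⟨n, β⟩, hp⟩
        have hβ := hsupp_of_ne _ hp
        simp only
        have hsub : (Finsupp.single a n + β).support ⊆ insert a T' := by
          refine Finset.Subset.trans Finsupp.support_add ?_
          refine Finset.union_subset ?_ ?_
          · exact Finset.Subset.trans Finsupp.support_single_subset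
              (by simp [Finset.singleton_subset_iff])
          · exact Finset.Subset.trans hβ.1 (Finset.subset_insert a T')
        rw [if_pos hsub]
        rw [Finsupp.prod_add_index' (fun i => pow_zero (x i)) (fun i b c => pow_add (x i) b c)]
        have hgval : g (n, β) = x a ^ n * β.prod fun i e => x i ^ e := by
          simp only [hg]
          rw [if_pos hβ.1]
        rw [hgval]
        congr 1
        exact Finsupp.prod_single_index (pow_zero (x a))

/-- the geometric-series function `f(x) = ∑_{α ∈ ℕ^(ℕ)} x^α` is
well defined (the monomial family is absolutely summable) on
`D = {x : ∑_i |x_i| < 1}`, and there `f(x) = ∏_{i} 1/(1 - x_i)`. -/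
theorem geometric_series_function (x : ℕ → ℝ)
    (hx : Summable fun i => |x i|) (hx1 : (∑' i, |x i|) < 1) :
    Summable (fun α : ℕ →₀ ℕ => |∏ i ∈ α.support, x i ^ α i|) ∧
    (∑' α : ℕ →₀ ℕ, ∏ i ∈ α.support, x i ^ α i) = ∏' i, (1 - x i)⁻¹ := by
  classical
  have hx' : ∀ i, |x i| < 1 := fun i =>
    lt_of_le_of_lt (Summable.le_tsum hx i fun j _ => abs_nonneg _) hx1
  have habs : Summable (fun α : ℕ →₀ ℕ => |α.prod fun i e => x i ^ e|) :=
    geom_summable_abs x hx hx1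
  have hg : Summable (fun α : ℕ →₀ ℕ => α.prod fun i e => x i ^ e) := habs.of_abs
  refine ⟨habs, ?_⟩
  have hasprod : HasProd (fun i => (1 - x i)⁻¹)
      (∑' α : ℕ →₀ ℕ, α.prod fun i e => x i ^ e) := by
    show Filter.Tendsto (fun T : Finset ℕ => ∏ i ∈ T, (1 - x i)⁻¹) Filter.atTop
      (nhds (∑' α : ℕ →₀ ℕ, α.prod fun i e => x i ^ e))
    rw [Metric.tendsto_nhds]
    intro ε hε
    obtain ⟨S₀, hS₀⟩ : ∃ S₀ : Finset (ℕ →₀ ℕ),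
        ∑' (α : {α : ℕ →₀ ℕ // α ∉ S₀}), |(α : ℕ →₀ ℕ).prod fun i e => x i ^ e| < ε := by
      have h := tendsto_tsum_compl_atTop_zero
        (fun α : ℕ →₀ ℕ => |α.prod fun i e => x i ^ e|)
      rw [Metric.tendsto_nhds] at h
      obtain ⟨S₀, h2⟩ := Filter.eventually_atTop.mp (h ε hε)
      refine ⟨S₀, ?_⟩
      have := h2 S₀ le_rfl
      rw [Real.dist_eq, sub_zero] at this
      exact lt_of_le_of_lt (le_abs_self _) this
    rw [Filter.eventually_atTop]
    refine ⟨S₀.sup Finsupp.support, fun T hT => ?_⟩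
    set s : Set (ℕ →₀ ℕ) := {α | α.support ⊆ T} with hs
    have hsum_s : Summable ((fun α : ℕ →₀ ℕ => α.prod fun i e => x i ^ e) ∘
        (Subtype.val : s → _)) := hg.subtype s
    have hsum_sc : Summable ((fun α : ℕ →₀ ℕ => α.prod fun i e => x i ^ e) ∘
        (Subtype.val : ↑sᶜ → _)) := hg.subtype sᶜ
    have hsplit := Summable.tsum_add_tsum_compl (s := s) hsum_s hsum_sc
    have hprod_eq : ∏ i ∈ T, (1 - x i)⁻¹
        = ∑' (α : s), ((α : ℕ →₀ ℕ).prod fun i e => x i ^ e) := by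
      rw [tsum_subtype s (fun α : ℕ →₀ ℕ => α.prod fun i e => x i ^ e)]
      rw [← (geom_hasSum_F x hx' habs T).tsum_eq]
      congr 1
      funext α
      rw [Set.indicator_apply]
      simp [hs, Set.mem_setOf_eq]
    rw [Real.dist_eq, hprod_eq]
    have hkey : (∑' (α : s), ((α : ℕ →₀ ℕ).prod fun i e => x i ^ e))
        - (∑' α : ℕ →₀ ℕ, α.prod fun i e => x i ^ e)
        = -(∑' (α : ↑sᶜ), ((α : ℕ →₀ ℕ).prod fun i e => x i ^ e)) := by
      rw [← hsplit]; ring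
    rw [hkey, abs_neg]
    have habs_sc : Summable (fun α : ↑sᶜ => |(α : ℕ →₀ ℕ).prod fun i e => x i ^ e|) :=
      habs.subtype sᶜ
    calc |∑' (α : ↑sᶜ), ((α : ℕ →₀ ℕ).prod fun i e => x i ^ e)|
        ≤ ∑' (α : ↑sᶜ), |(α : ℕ →₀ ℕ).prod fun i e => x i ^ e| := by
          simpa [Real.norm_eq_abs] using
            norm_tsum_le_tsum_norm (f := fun α : ↑sᶜ => (α : ℕ →₀ ℕ).prod fun i e => x i ^ e)
              (by simpa [Real.norm_eq_abs] using habs_sc)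
      _ ≤ ∑' (α : {α : ℕ →₀ ℕ // α ∉ S₀}), |(α : ℕ →₀ ℕ).prod fun i e => x i ^ e| := by
          refine Summable.tsum_le_tsum_of_inj (fun α : ↑sᶜ => (⟨(α : ℕ →₀ ℕ), ?_⟩ : {α : ℕ →₀ ℕ // α ∉ S₀}))
            ?_ (fun c _ => abs_nonneg _) (fun α => le_refl _) habs_sc (habs.subtype _)
          · intro hmem
            refine α.2 ?_
            show (α : ℕ →₀ ℕ).support ⊆ T
            exact Finset.Subset.trans (Finset.le_sup (f := Finsupp.support) hmem) hT
          · intro α β h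
            apply Subtype.ext
            have h2 : ((α : ℕ →₀ ℕ)) = ((β : ℕ →₀ ℕ)) :=
              congrArg (Subtype.val : {γ : ℕ →₀ ℕ // γ ∉ S₀} → ℕ →₀ ℕ) h
            exact h2
      _ < ε := hS₀
  rw [hasprod.tprod_eq]
  rfl
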